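/- For every finite connected graph G and any start vertex s, the cluster-radius R_s(G) of the layering partition satisfies tb(G) ≤ R_s(G) + 1, where tb(G) is the tree-breadth of G. Consequently tb(G) ≤ Δ_s(G) + 1. -/

import Mathlib

/-- Two vertices are in the same cluster of the layering partition `LP(G,s)` iff they
are in the same layer (same distance from `s`) and are joined by a walk all of whose
vertices are at distance at least that layer index from `s`. -/
def SameCluster {V : Type*} (G : SimpleGraph V) (s u v : V) : Prop :=
  G.dist s u = G.dist s v ∧
    ∃ p : G.Walk u v, ∀ w ∈ p.support, G.dist s u ≤ G.dist s w

/-- The cluster-diameter `Δ_s(G)`: the largest diameter (in `d_G`) of a cluster of the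
layering partition `LP(G,s)`. -/
noncomputable def clusterDiameter {V : Type*} (G : SimpleGraph V) (s : V) : ℕ :=
  sSup {n : ℕ | ∃ u v, SameCluster G s u v ∧ G.dist u v = n}

/-- The cluster-radius `R_s(G)`: the smallest `r` such that every cluster of the
layering partition `LP(G,s)` is contained in some ball of radius `r` of `G`. -/
noncomputable def clusterRadius {V : Type*} (G : SimpleGraph V) (s : V) : ℕ :=
  sInf {r : ℕ | ∀ u, ∃ c, ∀ v, SameCluster G s u v → G.dist c v ≤ r}

/-- A tree-decomposition of a graph `G`: a tree `T` on an index type whose nodes carry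
bags `X i ⊆ V` covering all vertices and all edges, such that the bags containing any
fixed vertex form a connected subtree of `T` (here: every node on the (unique) path of
`T` between two bags containing `v` also contains `v`). -/
def IsTreeDecomp {V : Type} {ι : Type} (G : SimpleGraph V) (T : SimpleGraph ι)
    (X : ι → Set V) : Prop :=
  T.IsTree ∧
  (∀ v, ∃ i, v ∈ X i) ∧
  (∀ u v, G.Adj u v → ∃ i, u ∈ X i ∧ v ∈ X i) ∧
  (∀ (v : V) (i j : ι), v ∈ X i → v ∈ X j →
    ∀ p : T.Walk i j, p.IsPath → ∀ k ∈ p.support, v ∈ X k)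

/-- The tree-length `tl(G)`: the least `ℓ` such that `G` has a tree-decomposition all
of whose bags have `d_G`-diameter at most `ℓ`. -/
noncomputable def treeLength {V : Type} (G : SimpleGraph V) : ℕ :=
  sInf {ℓ : ℕ | ∃ (ι : Type) (T : SimpleGraph ι) (X : ι → Set V),
    IsTreeDecomp G T X ∧ ∀ i, ∀ u ∈ X i, ∀ v ∈ X i, G.dist u v ≤ ℓ}

/-- The tree-breadth `tb(G)`: the least `r` such that `G` has a tree-decomposition all
of whose bags are contained in balls of radius `r` of `G`. -/
noncomputable def treeBreadth {V : Type} (G : SimpleGraph V) : ℕ :=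
  sInf {r : ℕ | ∃ (ι : Type) (T : SimpleGraph ι) (X : ι → Set V),
    IsTreeDecomp G T X ∧ ∀ i, ∃ c, ∀ u ∈ X i, G.dist u c ≤ r}


namespace ClusterAux

open SimpleGraph

variable {V : Type} {G : SimpleGraph V} {s : V}

lemma sc_refl (u : V) : SameCluster G s u u :=
  ⟨rfl, Walk.nil, by simp⟩

lemma sc_symm {u v : V} (h : SameCluster G s u v) : SameCluster G s v u := by
  obtain ⟨h1, p, hp⟩ := h
  exact ⟨h1.symm, p.reverse, fun w hw => by
    rw [Walk.support_reverse, List.mem_reverse] at hw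
    exact h1 ▸ hp w hw⟩

lemma sc_trans {u v w : V} (h : SameCluster G s u v) (h' : SameCluster G s v w) :
    SameCluster G s u w := by
  obtain ⟨h1, p, hp⟩ := h
  obtain ⟨h2, q, hq⟩ := h'
  refine ⟨h1.trans h2, p.append q, fun x hx => ?_⟩
  rw [Walk.mem_support_append_iff] at hx
  rcases hx with hx | hx
  · exact hp x hx
  · exact h1 ▸ hq x hx

def cSetoid (G : SimpleGraph V) (s : V) : Setoid V :=
  ⟨SameCluster G s, ⟨sc_refl, sc_symm, sc_trans⟩⟩


lemma adj_dist_one {u v : V} (h : G.Adj u v) : G.dist u v = 1 :=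
  SimpleGraph.dist_eq_one_iff_adj.mpr h

lemma exists_parent (hG : G.Connected) (u : V) (h : G.dist s u ≠ 0) :
    ∃ y, G.Adj y u ∧ G.dist s y + 1 = G.dist s u := by
  obtain ⟨p, hp⟩ := exists_walk_of_dist_ne_zero h
  cases p with
  | nil => exact absurd dist_self h
  | cons h' q =>
    obtain ⟨x, w, h'', hc⟩ := Walk.exists_cons_eq_concat h' q
    refine ⟨x, h'', ?_⟩
    have hlen : w.length + 1 = G.dist s u := by
      rw [hc, Walk.length_concat] at hp; exact hp
    have h1 : G.dist s x ≤ w.length := dist_le w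
    have h2 : G.dist s u ≤ G.dist s x + 1 := by
      have := hG.dist_triangle (u := s) (v := x) (w := u)
      rw [adj_dist_one h''] at this
      exact this
    omega

variable (hG : G.Connected)

noncomputable def pav (hG : G.Connected) (s : V) (u : V) : V :=
  if h : G.dist s u = 0 then u else (exists_parent hG u h).choose

lemma pav_spec {u : V} (h : G.dist s u ≠ 0) :
    G.Adj (pav hG s u) u ∧ G.dist s (pav hG s u) + 1 = G.dist s u := by
  rw [pav, dif_neg h]
  exact (exists_parent hG u h).choose_spec

lemma pav_eq_self {u : V} (h : G.dist s u = 0) : pav hG s u = u := by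
  rw [pav, dif_pos h]

lemma sc_pav {u v : V} (h : SameCluster G s u v) :
    SameCluster G s (pav hG s u) (pav hG s v) := by
  by_cases h0 : G.dist s u = 0
  · have h0' : G.dist s v = 0 := h.1 ▸ h0
    rw [pav_eq_self hG h0, pav_eq_self hG h0']; exact h
  · have h0' : G.dist s v ≠ 0 := h.1 ▸ h0
    obtain ⟨hu1, hu2⟩ := pav_spec hG h0
    obtain ⟨hv1, hv2⟩ := pav_spec hG h0'
    obtain ⟨h1, p, hp⟩ := h
    refine ⟨by omega, Walk.cons hu1 (p.concat hv1.symm), fun w hw => ?_⟩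
    rw [Walk.support_cons, List.mem_cons] at hw
    rcases hw with rfl | hw
    · exact le_rfl
    · rw [Walk.support_concat, List.mem_append, List.mem_singleton] at hw
      rcases hw with hw | rfl
      · have := hp w hw; omega
      · omega


/-! ### The generic parent-pointer graph and its tree-ness -/

def pG {ι : Type} (P : ι → ι) : SimpleGraph ι where
  Adj a b := a ≠ b ∧ (P a = b ∨ P b = a)
  symm := ⟨fun a b ⟨h1, h2⟩ => ⟨h1.symm, h2.symm⟩⟩
  loopless := ⟨fun a h => h.1 rfl⟩

lemma pG_connected {ι : Type} (P : ι → ι) (rk : ι → ℕ) (root : ι)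
    (hrk : ∀ x, P x ≠ x → rk (P x) < rk x)
    (hroot : ∀ x, P x = x → x = root) : (pG P).Connected := by
  have key : ∀ n x, rk x ≤ n → (pG P).Reachable x root := by
    intro n
    induction n with
    | zero =>
      intro x hx
      have hPx : P x = x := by
        by_contra hne
        have := hrk x hne; omega
      exact (hroot x hPx) ▸ Reachable.refl x
    | succ n ih =>
      intro x hx
      by_cases hPx : P x = x
      · exact (hroot x hPx) ▸ Reachable.refl x
      · have hadj : (pG P).Adj x (P x) := ⟨fun he => hPx he.symm, Or.inl rfl⟩
        exact hadj.reachable.trans (ih (P x) (by have := hrk x hPx; omega))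
  have : Nonempty ι := ⟨root⟩
  exact ⟨fun a b => (key (rk a) a le_rfl).trans (key (rk b) b le_rfl).symm⟩

lemma pG_no_cycle {ι : Type} (P : ι → ι) (rk : ι → ℕ)
    (hrk : ∀ x, P x ≠ x → rk (P x) < rk x)
    (m : ι) (c : (pG P).Walk m m) (hc : c.IsCycle)
    (hmax : ∀ x ∈ c.support, rk x ≤ rk m) : False := by
  cases c with
  | nil => exact hc.ne_nil rfl
  | @cons _ b _ hadj q =>
    have hlen : 3 ≤ (Walk.cons hadj q).length := hc.three_le_length
    obtain ⟨x, w, h'', hdec⟩ := Walk.exists_cons_eq_concat hadj q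
    -- P m = b
    have hb : b ∈ (Walk.cons hadj q).support := by
      rw [Walk.support_cons]; exact List.mem_cons_of_mem _ q.start_mem_support
    have hPmb : P m = b := by
      rcases hadj with ⟨hne, hPm | hPb⟩
      · exact hPm
      · exfalso
        have hPbb : P b ≠ b := by rw [hPb]; exact hne
        have := hrk b hPbb
        rw [hPb] at this
        exact absurd (hmax b hb) (by omega)
    -- P m = x
    have hx : x ∈ (Walk.cons hadj q).support := by
      rw [hdec, Walk.support_concat, List.mem_append]
      exact Or.inl w.end_mem_support
    have hPmx : P m = x := by
      rcases h'' with ⟨hne, hPx | hPm⟩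
      · exfalso
        have hPxx : P x ≠ x := by rw [hPx]; exact hne.symm
        have := hrk x hPxx
        rw [hPx] at this
        exact absurd (hmax x hx) (by omega)
      · exact hPm
    have hbx : b = x := hPmb ▸ hPmx
    -- edge list contradiction
    have hedges : s(m, b) :: q.edges = w.edges.concat s(x, m) := by
      rw [← Walk.edges_cons hadj q, hdec, Walk.edges_concat]
    have hqne : q.edges ≠ [] := by
      have : q.edges.length = q.length := q.length_edges
      have : q.length + 1 = (Walk.cons hadj q).length := (Walk.length_cons _ _).symm
      intro hnil
      simp [hnil] at *
      omega
    obtain ⟨e0, t, hq⟩ := List.exists_cons_of_ne_nil hqne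
    have h1 : (s(m, b) :: q.edges).getLast? = q.edges.getLast? := by
      rw [hq, List.getLast?_cons_cons]
    have h3 : q.edges.getLast? = some s(x, m) := by
      rw [← h1, hedges, List.concat_eq_append, List.getLast?_concat]
    have hmem : s(m, b) ∈ q.edges := by
      have := List.mem_of_getLast? h3
      rwa [← hbx, Sym2.eq_swap] at this
    have hnodup : ((Walk.cons hadj q).edges).Nodup := hc.edges_nodup
    rw [Walk.edges_cons, List.nodup_cons] at hnodup
    exact hnodup.1 hmem

lemma pG_isTree {ι : Type} (P : ι → ι) (rk : ι → ℕ) (root : ι)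
    (hrk : ∀ x, P x ≠ x → rk (P x) < rk x)
    (hroot : ∀ x, P x = x → x = root) : (pG P).IsTree := by
  classical
  refine ⟨pG_connected P rk root hrk hroot, ?_⟩
  intro a c hc
  have hne : c.support.toFinset.Nonempty := ⟨a, by simp⟩
  obtain ⟨m, hmS, hmax⟩ := c.support.toFinset.exists_max_image rk hne
  rw [List.mem_toFinset] at hmS
  have hmax' : ∀ x ∈ c.support, rk x ≤ rk m := fun x hx =>
    hmax x (List.mem_toFinset.mpr hx)
  refine pG_no_cycle P rk hrk m (c.rotate m hmS) (hc.rotate hmS) ?_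
  intro x hx
  apply hmax'
  rw [Walk.mem_support_iff] at hx
  rcases hx with rfl | hx
  · exact hmS
  · have hrot := Walk.support_rotate c m hmS
    have : x ∈ c.support.tail := hrot.mem_iff.mp hx
    exact List.mem_of_mem_tail this


/-! ### The cluster quotient -/

section Clusters

abbrev Cl (G : SimpleGraph V) (s : V) : Type := Quotient (cSetoid G s)

abbrev mkC (G : SimpleGraph V) (s : V) (u : V) : Cl G s := Quotient.mk (cSetoid G s) u

noncomputable def lvl (G : SimpleGraph V) (s : V) : Cl G s → ℕ :=
  Quotient.lift (G.dist s) (fun _ _ h => h.1)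

noncomputable def Pc (hG : G.Connected) : Cl G s → Cl G s :=
  Quotient.lift (fun u => mkC G s (pav hG s u))
    (fun _ _ h => Quotient.sound (sc_pav hG h))

@[simp] lemma lvl_mk (u : V) : lvl G s (mkC G s u) = G.dist s u := rfl

@[simp] lemma Pc_mk (u : V) : Pc hG (mkC G s u) = mkC G s (pav hG s u) := rfl

lemma lvl_Pc {c : Cl G s} (h : lvl G s c ≠ 0) : lvl G s (Pc hG c) + 1 = lvl G s c := by
  induction c using Quotient.ind with
  | _ u => exact (pav_spec hG h).2

lemma Pc_eq_self {c : Cl G s} (h : lvl G s c = 0) : Pc hG c = c := by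
  induction c using Quotient.ind with
  | _ u => rw [Pc_mk, pav_eq_self hG h]

lemma root_unique (hG : G.Connected) {c : Cl G s} (h : lvl G s c = 0) : c = mkC G s s := by
  induction c using Quotient.ind with
  | _ u =>
    have : s = u := hG.dist_eq_zero_iff.mp h
    exact congrArg _ this.symm

lemma Pc_hrk : ∀ c : Cl G s, Pc hG c ≠ c → lvl G s (Pc hG c) < lvl G s c := by
  intro c h
  by_cases h0 : lvl G s c = 0
  · exact absurd (Pc_eq_self hG h0) h
  · have := lvl_Pc hG h0; omega

lemma Pc_hroot : ∀ c : Cl G s, Pc hG c = c → c = mkC G s s := by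
  intro c h
  by_cases h0 : lvl G s c = 0
  · exact root_unique hG h0
  · have := lvl_Pc hG h0; rw [h] at this; omega

lemma clTree (hG : G.Connected) : (pG (Pc (G := G) (s := s) hG)).IsTree :=
  pG_isTree (Pc hG) (lvl G s) (mkC G s s) (Pc_hrk hG) (Pc_hroot hG)

/-! ### The bags -/

def bag (G : SimpleGraph V) (s : V) (c : Cl G s) : Set V :=
  {v | mkC G s v = c ∨ ∃ u, mkC G s u = c ∧ G.Adj v u ∧ G.dist s v + 1 = G.dist s u}

lemma mk_eq_Pc_of_adj_down {v u : V} (hadj : G.Adj v u)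
    (hlay : G.dist s v + 1 = G.dist s u) : mkC G s v = Pc hG (mkC G s u) := by
  rw [Pc_mk]
  have hu0 : G.dist s u ≠ 0 := by omega
  obtain ⟨hp1, hp2⟩ := pav_spec hG hu0
  refine Quotient.sound ⟨by omega, Walk.cons hadj (Walk.cons hp1.symm Walk.nil), ?_⟩
  intro w hw
  simp only [Walk.support_cons, Walk.support_nil, List.mem_cons,
    List.not_mem_nil, or_false] at hw
  rcases hw with rfl | rfl | rfl
  · exact le_rfl
  · omega
  · omega

lemma mk_eq_of_adj_same {u v : V} (hadj : G.Adj u v) (hlay : G.dist s u = G.dist s v) :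
    mkC G s u = mkC G s v := by
  refine Quotient.sound ⟨hlay, Walk.cons hadj Walk.nil, ?_⟩
  intro w hw
  simp only [Walk.support_cons, Walk.support_nil, List.mem_cons, List.not_mem_nil, or_false] at hw
  rcases hw with rfl | rfl
  · exact le_rfl
  · omega

lemma adj_layers (hG : G.Connected) {u v : V} (hadj : G.Adj u v) :
    G.dist s v = G.dist s u ∨ G.dist s v + 1 = G.dist s u ∨ G.dist s u + 1 = G.dist s v := by
  have h1 : G.dist s u ≤ G.dist s v + 1 := by
    have := hG.dist_triangle (u := s) (v := v) (w := u)
    rw [adj_dist_one hadj.symm] at this; exact this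
  have h2 : G.dist s v ≤ G.dist s u + 1 := by
    have := hG.dist_triangle (u := s) (v := u) (w := v)
    rw [adj_dist_one hadj] at this; exact this
  omega

lemma mem_bag_cases {v : V} {i : Cl G s} (h : v ∈ bag G s i) :
    i = mkC G s v ∨ (i ≠ mkC G s v ∧ Pc hG i = mkC G s v) := by
  rcases h with h | ⟨u, hu, hadj, hlay⟩
  · exact Or.inl h.symm
  · refine Or.inr ⟨?_, ?_⟩
    · intro he
      have : lvl G s i = lvl G s (mkC G s v) := by rw [he]
      rw [← hu, lvl_mk, lvl_mk] at this
      omega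
    · rw [← hu, ← mk_eq_Pc_of_adj_down hG hadj hlay]

lemma self_mem_bag (v : V) : v ∈ bag G s (mkC G s v) := Or.inl rfl

end Clusters

end ClusterAux


namespace ClusterAux

open SimpleGraph

variable {V : Type} {G : SimpleGraph V} {s : V}

lemma path_loop_eq {ι : Type} {T : SimpleGraph ι} {i : ι} {p : T.Walk i i}
    (hp : p.IsPath) : p = Walk.nil := by
  have := SimpleGraph.Path.loop_eq (⟨p, hp⟩ : T.Path i i)
  exact congrArg Subtype.val this

lemma exists_good_path (hG : G.Connected) (v : V) {i j : Cl G s}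
    (hvi : v ∈ bag G s i) (hvj : v ∈ bag G s j) (hij : i ≠ j) :
    ∃ q : (pG (Pc hG)).Walk i j, q.IsPath ∧ ∀ k ∈ q.support, v ∈ bag G s k := by
  set T := pG (Pc hG) with hT
  set m := mkC G s v with hm
  have hvm : v ∈ bag G s m := self_mem_bag v
  rcases mem_bag_cases hG hvi with hi | ⟨hi1, hi2⟩ <;>
    rcases mem_bag_cases hG hvj with hj | ⟨hj1, hj2⟩
  · exact absurd (hi.trans hj.symm) hij
  · -- i = m, j is a child of m
    subst hi
    have hadj0 : T.Adj j (mkC G s v) := ⟨hj1, Or.inl hj2⟩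
    have hadj : T.Adj (mkC G s v) j := hadj0.symm
    refine ⟨Walk.cons hadj Walk.nil, ?_, ?_⟩
    · rw [Walk.cons_isPath_iff]
      exact ⟨Walk.IsPath.nil, by simp [hij]⟩
    · intro k hk
      simp only [Walk.support_cons, Walk.support_nil, List.mem_cons,
        List.not_mem_nil, or_false] at hk
      rcases hk with rfl | rfl
      · exact hvi
      · exact hvj
  · -- j = m, i is a child of m
    subst hj
    have hadj : T.Adj i (mkC G s v) := ⟨hi1, Or.inl hi2⟩
    refine ⟨Walk.cons hadj Walk.nil, ?_, ?_⟩
    · rw [Walk.cons_isPath_iff]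
      exact ⟨Walk.IsPath.nil, by simp [hij]⟩
    · intro k hk
      simp only [Walk.support_cons, Walk.support_nil, List.mem_cons,
        List.not_mem_nil, or_false] at hk
      rcases hk with rfl | rfl
      · exact hvi
      · exact hvj
  · -- both children of m
    have hadj1 : T.Adj i m := ⟨hi1, Or.inl hi2⟩
    have hadj0 : T.Adj j m := ⟨hj1, Or.inl hj2⟩
    have hadj2 : T.Adj m j := hadj0.symm
    refine ⟨Walk.cons hadj1 (Walk.cons hadj2 Walk.nil), ?_, ?_⟩
    · rw [Walk.cons_isPath_iff, Walk.cons_isPath_iff]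
      refine ⟨⟨Walk.IsPath.nil, by simp [hm, Ne.symm hj1]⟩, ?_⟩
      simp only [Walk.support_cons, Walk.support_nil, List.mem_cons,
        List.not_mem_nil, or_false]
      push_neg
      exact ⟨hi1, hij⟩
    · intro k hk
      simp only [Walk.support_cons, Walk.support_nil, List.mem_cons,
        List.not_mem_nil, or_false] at hk
      rcases hk with rfl | rfl | rfl
      · exact hvi
      · exact hvm
      · exact hvj

lemma clDecomp (hG : G.Connected) :
    IsTreeDecomp G (pG (Pc (G := G) (s := s) hG)) (bag G s) := by
  refine ⟨clTree hG, ?_, ?_, ?_⟩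
  · exact fun v => ⟨mkC G s v, self_mem_bag v⟩
  · intro u v huv
    rcases adj_layers hG huv with h | h | h
    · exact ⟨mkC G s u, self_mem_bag u, Or.inl (mk_eq_of_adj_same huv h.symm).symm⟩
    · exact ⟨mkC G s u, self_mem_bag u, Or.inr ⟨u, rfl, huv.symm, h⟩⟩
    · exact ⟨mkC G s v, Or.inr ⟨v, rfl, huv, h⟩, self_mem_bag v⟩
  · intro v i j hvi hvj p hp k hk
    by_cases hij : i = j
    · subst hij
      rw [path_loop_eq hp] at hk
      simp only [Walk.support_nil, List.mem_singleton] at hk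
      exact hk ▸ hvi
    · obtain ⟨q, hq, hsup⟩ := exists_good_path hG v hvi hvj hij
      have hpq : (⟨p, hp⟩ : (pG (Pc hG)).Path i j) = ⟨q, hq⟩ :=
        (clTree hG).2.path_unique _ _
      have : p = q := congrArg Subtype.val hpq
      exact hsup k (this ▸ hk)

end ClusterAux

/-- For every finite connected graph `G` and start vertex `s`, the tree-breadth
satisfies `tb(G) ≤ R_s(G) + 1`, and consequently `tb(G) ≤ Δ_s(G) + 1`. -/
theorem treeBreadth_le_clusterRadius_add_one {V : Type} [Fintype V]
    (G : SimpleGraph V) (hG : G.Connected) (s : V) :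
    treeBreadth G ≤ clusterRadius G s + 1 ∧
      treeBreadth G ≤ clusterDiameter G s + 1 := by
  classical
  open ClusterAux in
  -- the radius defining set is nonempty
  have hRne : (Finset.univ.sup (G.dist s)) ∈
      {r : ℕ | ∀ u, ∃ c, ∀ v, SameCluster G s u v → G.dist c v ≤ r} := by
    intro u
    exact ⟨s, fun v _ => Finset.le_sup (Finset.mem_univ v)⟩
  set R := clusterRadius G s with hRdef
  have hR : R ∈ {r : ℕ | ∀ u, ∃ c, ∀ v, SameCluster G s u v → G.dist c v ≤ r} :=
    Nat.sInf_mem ⟨_, hRne⟩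
  choose cent hcent using hR
  -- the tree-decomposition given by the layering partition has breadth ≤ R + 1
  have hbreadth : ∀ i : Cl G s, ∃ c, ∀ u ∈ bag G s i, G.dist u c ≤ R + 1 := by
    intro i
    refine ⟨cent i.out, ?_⟩
    intro v hv
    rcases hv with hv | ⟨u, hu, hadj, _⟩
    · have hsc : SameCluster G s i.out v := by
        refine Quotient.exact (s := cSetoid G s) ?_
        rw [Quotient.out_eq]; exact hv.symm
      have := hcent i.out v hsc
      rw [SimpleGraph.dist_comm]
      omega
    · have hsc : SameCluster G s i.out u := by
        refine Quotient.exact (s := cSetoid G s) ?_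
        rw [Quotient.out_eq]; exact hu.symm
      have h1 := hcent i.out u hsc
      have h2 : G.dist v (cent i.out) ≤ G.dist v u + G.dist u (cent i.out) :=
        hG.dist_triangle
      rw [adj_dist_one hadj] at h2
      have h3 : G.dist u (cent i.out) = G.dist (cent i.out) u := SimpleGraph.dist_comm
      omega
  have h1 : treeBreadth G ≤ R + 1 := by
    apply Nat.sInf_le
    exact ⟨Cl G s, pG (Pc (G := G) (s := s) hG), bag G s, clDecomp hG, hbreadth⟩
  -- cluster radius is at most cluster diameter
  have hbdd : BddAbove {n : ℕ | ∃ u v, SameCluster G s u v ∧ G.dist u v = n} := by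
    refine ⟨Finset.univ.sup (fun p : V × V => G.dist p.1 p.2), ?_⟩
    rintro n ⟨u, v, _, rfl⟩
    exact Finset.le_sup (f := fun p : V × V => G.dist p.1 p.2) (Finset.mem_univ (u, v))
  have hRD : clusterRadius G s ≤ clusterDiameter G s := by
    apply Nat.sInf_le
    intro u
    exact ⟨u, fun v hv => le_csSup hbdd ⟨u, v, hv, rfl⟩⟩
  exact ⟨h1, h1.trans (by omega)⟩
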